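/- Let K be a field of characteristic zero, let E be a K-vector space of dimension d with basis e_1,…,e_d, and let λ be a partition with at most d parts. If v ∈ ∇^λ(E) satisfies X^{(c)}·v = 0 for all c ∈ {2,…,d}, then v is a scalar multiple of F(t^λ), where t^λ is the λ-tableau with every entry in row i equal to i. -/

import Mathlib

open scoped Classical

namespace Pleth

/-- A finitely supported function `f : ℕ → ℕ` is a partition when its values are weakly
decreasing.  Parts are indexed from `0`, so `f i` is the `(i+1)`-st part `λ_{i+1}`;
parts beyond the length of the partition are `0`. -/
def IsPartition (f : ℕ →₀ ℕ) : Prop := ∀ i j : ℕ, i ≤ j → f j ≤ f i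

/-- `f` is a partition of `n`. -/
def IsPartitionOf (f : ℕ →₀ ℕ) (n : ℕ) : Prop := IsPartition f ∧ f.sum (fun _ k => k) = n

/-- The multiset of (nonzero) parts of `f`. -/
def partsOf (f : ℕ →₀ ℕ) : Multiset ℕ := f.support.val.map f

/-- The rectangular partition `(v^r)` with `r` parts equal to `v`. -/
noncomputable def rect (r v : ℕ) : ℕ →₀ ℕ := (Finset.range r).sum fun i => Finsupp.single i v

/-- The dominance order on compositions:  `Dominates α β` means `α ⊵ β`. -/
def Dominates (α β : ℕ →₀ ℕ) : Prop :=
  ∀ k : ℕ, ∑ i ∈ Finset.range k, β i ≤ ∑ i ∈ Finset.range k, α i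

/-- The Young diagram of a (finitely supported) shape, with rows and columns indexed
from `0`: the cell `(i, j)` lies in row `i` and column `j`. -/
def cells (lam : ℕ →₀ ℕ) : Finset (ℕ × ℕ) :=
  (lam.support ×ˢ Finset.range (lam.support.sup lam)).filter fun p => p.2 < lam p.1

lemma mem_cells {lam : ℕ →₀ ℕ} {p : ℕ × ℕ} : p ∈ cells lam ↔ p.2 < lam p.1 := by
  constructor
  · exact fun h => (Finset.mem_filter.mp h).2
  · intro h
    exact Finset.mem_filter.mpr ⟨Finset.mem_product.mpr
      ⟨Finsupp.mem_support_iff.mpr (by omega),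
       Finset.mem_range.mpr (lt_of_lt_of_le h (Finset.le_sup (Finsupp.mem_support_iff.mpr (by omega))))⟩, h⟩

/-- The type of cells of the Young diagram of `lam`. -/
abbrev Cell (lam : ℕ →₀ ℕ) : Type := {p : ℕ × ℕ // p ∈ cells lam}

/-- A `lam`-tableau with entries in `B` is a function from the Young diagram of `lam` to `B`. -/
abbrev Tab (lam : ℕ →₀ ℕ) (B : Type*) : Type _ := Cell lam → B

/-- The rows of `t` are weakly increasing with respect to the relation `le`. -/
def RowsWeak (lam : ℕ →₀ ℕ) {B : Type*} (le : B → B → Prop) (t : Tab lam B) : Prop :=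
  ∀ p q : Cell lam, p.1.1 = q.1.1 → p.1.2 ≤ q.1.2 → le (t p) (t q)

/-- The columns of `t` are strictly increasing with respect to the relation `lt`. -/
def ColsStrict (lam : ℕ →₀ ℕ) {B : Type*} (lt : B → B → Prop) (t : Tab lam B) : Prop :=
  ∀ p q : Cell lam, p.1.2 = q.1.2 → p.1.1 < q.1.1 → lt (t p) (t q)

/-- A semistandard tableau: rows weakly increasing, columns strictly increasing. -/
def IsSemistd (lam : ℕ →₀ ℕ) {B : Type*} [LinearOrder B] (t : Tab lam B) : Prop :=
  RowsWeak lam (· ≤ ·) t ∧ ColsStrict lam (· < ·) t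

/-- The semistandard `lam`-tableaux with entries in `B`. -/
abbrev SSYT (lam : ℕ →₀ ℕ) (B : Type*) [LinearOrder B] : Type _ :=
  {t : Tab lam B // IsSemistd lam t}

/-- The coefficient of the monomial `x^α = x_0^{α 0} x_1^{α 1} ⋯` in the Schur function
`s_lam`, namely the number of semistandard `lam`-tableaux with entries in `ℕ`
(the entry `b` corresponding to the variable `x_b`) having exactly `α b` entries
equal to `b` for every `b`. -/
noncomputable def schurCoeff (lam α : ℕ →₀ ℕ) : ℕ :=
  Nat.card {t : Tab lam ℕ // IsSemistd lam t ∧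
    ∀ b : ℕ, α b = (Finset.univ.filter (fun p : Cell lam => t p = b)).card}

/-- The set of entries of column `j` of the tableau `t`. -/
noncomputable def colSet (lam : ℕ →₀ ℕ) {B : Type*} [LinearOrder B] (t : Tab lam B) (j : ℕ) :
    Finset B :=
  (Finset.univ.filter (fun p : Cell lam => p.1.2 = j)).image t

/-- The total order on (column-standard) tableaux:  `t < u` if and only if, in the rightmost
column in which `t` and `u` differ, the greatest entry not appearing in both columns lies
in `u`. -/
def tabLT (lam : ℕ →₀ ℕ) {B : Type*} [LinearOrder B] (t u : Tab lam B) : Prop :=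
  ∃ j : ℕ, colSet lam t j ≠ colSet lam u j ∧
    (∀ j' : ℕ, j < j' → colSet lam t j' = colSet lam u j') ∧
    ∃ m : B, m ∈ colSet lam u j ∧ m ∉ colSet lam t j ∧
      ∀ x : B, ((x ∈ colSet lam t j ∧ x ∉ colSet lam u j) ∨
                (x ∈ colSet lam u j ∧ x ∉ colSet lam t j)) → x ≤ m

def tabLE (lam : ℕ →₀ ℕ) {B : Type*} [LinearOrder B] (t u : Tab lam B) : Prop :=
  t = u ∨ tabLT lam t u

/-- A plethystic semistandard tableau of shape `mu^nu`: a `nu`-tableau whose entries are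
semistandard `mu`-tableaux, with rows weakly increasing and columns strictly increasing
with respect to the total order `tabLT` on semistandard `mu`-tableaux. -/
def IsPSSYT (mu nu : ℕ →₀ ℕ) {B : Type*} [LinearOrder B] (T : Tab nu (SSYT mu B)) : Prop :=
  RowsWeak nu (fun s s' => tabLE mu s.1 s'.1) T ∧
  ColsStrict nu (fun s s' => tabLT mu s.1 s'.1) T

/-- `T` has weight `α`: for every letter `b`, the total number of entries equal to `b`
among the `mu`-tableau entries of `T` is `α b`. -/
def HasWeight (mu nu : ℕ →₀ ℕ) {B : Type*} [LinearOrder B] (T : Tab nu (SSYT mu B))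
    (α : B → ℕ) : Prop :=
  ∀ b : B, α b = ∑ P : Cell nu,
    (Finset.univ.filter (fun p : Cell mu => (T P).1 p = b)).card

/-- The coefficient of the monomial `x^α` in the plethysm `s_nu ∘ s_mu`, namely the number
of plethystic semistandard tableaux of shape `mu^nu` and weight `α`. -/
noncomputable def plethCoeff (nu mu α : ℕ →₀ ℕ) : ℕ :=
  Nat.card {T : Tab nu (SSYT mu ℕ) // IsPSSYT mu nu T ∧ HasWeight mu nu T (fun b => α b)}

end Pleth

namespace Pleth

/-- The canonical index type for the basis of `Sym^lam V`, where `V` is free with basis `B`: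
one multiset of entries (of the right size) for each row of the Young diagram. -/
abbrev RowData (lam : ℕ →₀ ℕ) (B : Type*) : Type _ := (i : ℕ) → Sym B (lam i)

/-- A concrete model for `Sym^lam V = ⊗_i Sym^{lam_i} V`, where `V` is the free `K`-module
with basis `{v_b : b ∈ B}`:  the free `K`-module on the GL-tabloids, i.e. on `RowData lam B`. -/
abbrev SymMod (lam : ℕ →₀ ℕ) (B : Type*) (K : Type*) [Semiring K] : Type _ :=
  RowData lam B →₀ K

/-- The multisets of row entries of a tableau. -/
def rowData (lam : ℕ →₀ ℕ) {B : Type*} (t : Tab lam B) : RowData lam B := fun i =>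
  ⟨(Finset.range (lam i)).attach.val.map
      (fun j => t ⟨(i, j.1), mem_cells.mpr (Finset.mem_range.mp j.2)⟩), by rw [Multiset.card_map, ← Finset.card_def, Finset.card_attach, Finset.card_range]⟩

/-- The GL-tabloid `f(t) = ⊗_i ∏_j v_{t(i,j)} ∈ Sym^lam V`. -/
noncomputable def tabloid (K : Type*) [CommRing K] (lam : ℕ →₀ ℕ) {B : Type*}
    (t : Tab lam B) : SymMod lam B K :=
  Finsupp.single (rowData lam t) 1

/-- The place-permutation action: `(t σ) (x) = t (σ⁻¹ x)`. -/
def permTab (lam : ℕ →₀ ℕ) {B : Type*} (t : Tab lam B) (σ : Equiv.Perm (Cell lam)) :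
    Tab lam B := fun p => t (σ⁻¹ p)

/-- `σ` preserves each column of the Young diagram, i.e. `σ ∈ CPP(lam)`. -/
def ColPres (lam : ℕ →₀ ℕ) (σ : Equiv.Perm (Cell lam)) : Prop :=
  ∀ p : Cell lam, (σ p).1.2 = p.1.2

/-- The GL-polytabloid `F(t) = ∑_{σ ∈ CPP(lam)} sgn(σ) f(tσ)`. -/
noncomputable def polytabloid (K : Type*) [CommRing K] (lam : ℕ →₀ ℕ) {B : Type*}
    (t : Tab lam B) : SymMod lam B K :=
  ∑ σ : Equiv.Perm (Cell lam),
    if ColPres lam σ then ((Equiv.Perm.sign σ : ℤ) • tabloid K lam (permTab lam t σ)) else 0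

/-- `∇^lam (V)`: the `K`-submodule of `Sym^lam V` spanned by the GL-polytabloids. -/
noncomputable def nabla (K : Type*) [CommRing K] (lam : ℕ →₀ ℕ) (B : Type*) :
    Submodule K (SymMod lam B K) :=
  Submodule.span K (Set.range (fun t : Tab lam B => polytabloid K lam t))

/-- The number of entries `≤ b` in row `i` of `t`; as a function of `i` this is the
composition `t^{≤ b}`. -/
noncomputable def rowCountLe (lam : ℕ →₀ ℕ) {B : Type*} [LinearOrder B] (t : Tab lam B)
    (b : B) (i : ℕ) : ℕ :=
  (Finset.univ.filter (fun p : Cell lam => p.1.1 = i ∧ t p ≤ b)).card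

/-- The dominance order on (row-semistandard) tableaux of the same shape:
`t ⊵ u` iff `t^{≤b} ⊵ u^{≤b}` for every `b`. -/
def TabDom (lam : ℕ →₀ ℕ) {B : Type*} [LinearOrder B] (t u : Tab lam B) : Prop :=
  ∀ b : B, ∀ k : ℕ,
    ∑ i ∈ Finset.range k, rowCountLe lam u b i ≤ ∑ i ∈ Finset.range k, rowCountLe lam t b i

/-- `t̄`: the tableau obtained from `t` by sorting each row into weakly increasing order. -/
noncomputable def rowsort (lam : ℕ →₀ ℕ) {B : Type*} [LinearOrder B] (t : Tab lam B) :
    Tab lam B :=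
  fun p => (List.insertionSort (· ≤ ·) ((List.range (lam p.1.1)).attach.map
      (fun j => t ⟨(p.1.1, j.1), mem_cells.mpr (List.mem_range.mp j.2)⟩))).getD p.1.2 (t p)

end Pleth

namespace Pleth

/-- The number of entries equal to `b` in the GL-tabloid datum `r`. -/
noncomputable def rdCount (lam : ℕ →₀ ℕ) {B : Type*} (r : RowData lam B) (b : B) : ℕ :=
  ∑ᶠ i : ℕ, Multiset.count b (r i).1

/-- The action of the diagonal matrix with diagonal entries `z` on `Sym^lam E`, where
`E = ℂ^d`: the GL-tabloid basis vector indexed by `r` is scaled by `∏_b z_b^{(number of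
entries equal to b in r)}`. -/
noncomputable def diagActL (lam : ℕ →₀ ℕ) (d : ℕ) (z : Fin d → ℂ) :
    SymMod lam (Fin d) ℂ →ₗ[ℂ] SymMod lam (Fin d) ℂ :=
  Finsupp.lsum ℂ (fun r => (∏ b : Fin d, z b ^ rdCount lam r b) • Finsupp.lsingle r)

/-- The `β`-weight space of the representation `∇^lam (E)` of `GL_d(ℂ)`: the set of
`v ∈ ∇^lam (E)` with `g ⬝ v = g_{11}^{β 0} ⋯ g_{dd}^{β (d-1)} v` for every invertible
diagonal matrix `g`. -/
noncomputable def weightSpace (lam : ℕ →₀ ℕ) (d : ℕ) (β : Fin d → ℕ) :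
    Submodule ℂ (SymMod lam (Fin d) ℂ) :=
  nabla ℂ lam (Fin d) ⊓ ⨅ z : {z : Fin d → ℂ // ∀ i, z i ≠ 0},
    LinearMap.eqLocus (diagActL lam d z.1) ((∏ i : Fin d, z.1 i ^ β i) • LinearMap.id)

/-- The formal character `Φ_{∇^lam(E)}(x_0, …, x_{d-1}) = ∑_β dim (∇^lam(E))_β · x^β`. -/
noncomputable def formalChar (lam : ℕ →₀ ℕ) (d : ℕ) : MvPolynomial (Fin d) ℂ :=
  ∑ᶠ β : Fin d → ℕ, (Module.finrank ℂ ↥(weightSpace lam d β) : MvPolynomial (Fin d) ℂ) *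
    ∏ i : Fin d, MvPolynomial.X i ^ β i

/-- The Schur polynomial `s_lam (x_0, …, x_{d-1}) = ∑_t x^t`, the sum over all semistandard
`lam`-tableaux with entries from `{0, …, d-1}`. -/
noncomputable def schurPoly (lam : ℕ →₀ ℕ) (d : ℕ) : MvPolynomial (Fin d) ℂ :=
  ∑ t : Tab lam (Fin d),
    if IsSemistd lam t then ∏ p : Cell lam, MvPolynomial.X (t p) else 0

/-- The action of the elementary matrix `X^{(c)}` (with a single `1` in position
`(c-1, c)`) of `gl_d(K)` on `Sym^lam E`, described on the GL-tabloid basis: the entry `c`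
is lowered to `c - 1` in each possible row, with multiplicity. -/
noncomputable def lowerVec (K : Type*) [CommRing K] (lam : ℕ →₀ ℕ) {d : ℕ} (c : Fin d)
    (r : RowData lam (Fin d)) : SymMod lam (Fin d) K :=
  ∑ᶠ i : ℕ, if h : c ∈ (r i).1 then
    (Multiset.count c (r i).1 : K) • Finsupp.single (Function.update r i
      ⟨(⟨c.1 - 1, Nat.lt_of_le_of_lt (Nat.sub_le _ _) c.2⟩ : Fin d) ::ₘ (r i).1.erase c, by
        have h2 := (r i).2
        have h1 : 0 < Multiset.card (r i).1 := Multiset.card_pos_iff_exists_mem.mpr ⟨c, h⟩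
        rw [Multiset.card_cons, Multiset.card_erase_of_mem h, Nat.pred_eq_sub_one]
        omega⟩) (1 : K)
  else 0

/-- The action of `X^{(c)} ∈ gl_d(K)` on `Sym^lam E`, as a linear map. -/
noncomputable def lowerL (K : Type*) [CommRing K] (lam : ℕ →₀ ℕ) {d : ℕ} (c : Fin d) :
    SymMod lam (Fin d) K →ₗ[K] SymMod lam (Fin d) K :=
  Finsupp.lsum K (fun r => LinearMap.toSpanSingleton K _ (lowerVec K lam c r))

/-- The row-sorted tableau realizing a GL-tabloid datum `r`. -/
noncomputable def tabOf (lam : ℕ →₀ ℕ) {B : Type*} [LinearOrder B] (r : RowData lam B) :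
    Tab lam B :=
  fun p => (Multiset.sort (r p.1.1).1 (· ≤ ·)).get ⟨p.1.2, by
    rw [Multiset.length_sort, (r p.1.1).2]; exact mem_cells.mp p.2⟩

/-- The action of a matrix `g` on `Sym^lam E`, `E = K^d`, described on the GL-tabloid
basis by multilinear expansion of `g ⬝ f(t) = ⊗_i ∏_j (g v_{t(i,j)})`. -/
noncomputable def matActL (K : Type*) [CommRing K] (lam : ℕ →₀ ℕ) (d : ℕ)
    (g : Matrix (Fin d) (Fin d) K) : SymMod lam (Fin d) K →ₗ[K] SymMod lam (Fin d) K :=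
  Finsupp.lsum K (fun r => LinearMap.toSpanSingleton K _
    (∑ u : Tab lam (Fin d), (∏ p : Cell lam, g (u p) (tabOf lam r p)) • tabloid K lam u))

end Pleth

namespace Pleth

lemma Equiv.Perm.apply_inv_self {α : Type*} (σ : _root_.Equiv.Perm α) (x : α) : σ (σ⁻¹ x) = x :=
  _root_.Equiv.apply_symm_apply σ x

lemma Equiv.Perm.inv_apply_self {α : Type*} (σ : _root_.Equiv.Perm α) (x : α) : σ⁻¹ (σ x) = x :=
  _root_.Equiv.symm_apply_apply σ x

section Aux

set_option linter.unusedSectionVars false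

open Finset

variable {K : Type*} [Field K] [CharZero K] {d : ℕ} {lam : ℕ →₀ ℕ}

/-- `c - 1` as an element of `Fin d`. -/
def cm1 {d : ℕ} (c : Fin d) : Fin d := ⟨c.1 - 1, Nat.lt_of_le_of_lt (Nat.sub_le _ _) c.2⟩

/-- The row datum obtained from `r` by lowering one entry `c` in row `i` to `c-1`. -/
noncomputable def lowR (lam : ℕ →₀ ℕ) {d : ℕ} (c : Fin d) (r : RowData lam (Fin d)) (i : ℕ)
    (h : c ∈ (r i).1) : RowData lam (Fin d) :=
  Function.update r i
    ⟨(⟨c.1 - 1, Nat.lt_of_le_of_lt (Nat.sub_le _ _) c.2⟩ : Fin d) ::ₘ (r i).1.erase c, by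
      have h2 := (r i).2
      have h1 : 0 < Multiset.card (r i).1 := Multiset.card_pos_iff_exists_mem.mpr ⟨c, h⟩
      rw [Multiset.card_cons, Multiset.card_erase_of_mem h, Nat.pred_eq_sub_one]
      omega⟩

lemma lowerVec_def (c : Fin d) (r : RowData lam (Fin d)) :
    lowerVec K lam c r = ∑ᶠ i : ℕ, if h : c ∈ (r i).1 then
      (Multiset.count c (r i).1 : K) • Finsupp.single (lowR lam c r i h) (1 : K) else 0 :=
  rfl

lemma row_card (r : RowData lam (Fin d)) (i : ℕ) : Multiset.card (r i).1 = lam i := (r i).2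

lemma row_empty (hlen : ∀ i : ℕ, d ≤ i → lam i = 0) (r : RowData lam (Fin d)) {i : ℕ}
    (hi : d ≤ i) : (r i).1 = 0 := by
  rw [← Multiset.card_eq_zero, row_card, hlen i hi]

lemma mem_row_lt (hlen : ∀ i : ℕ, d ≤ i → lam i = 0) {r : RowData lam (Fin d)} {i : ℕ}
    {x : Fin d} (hx : x ∈ (r i).1) : i < d := by
  by_contra h
  rw [row_empty hlen r (not_lt.mp h)] at hx
  exact absurd hx (Multiset.notMem_zero x)

lemma cell_row_lt_d (hlen : ∀ i : ℕ, d ≤ i → lam i = 0) (p : Cell lam) : p.1.1 < d := by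
  by_contra h
  have h1 := mem_cells.mp p.2
  rw [hlen p.1.1 (not_lt.mp h)] at h1
  omega

lemma lowerVec_eq_sum (hlen : ∀ i : ℕ, d ≤ i → lam i = 0) (c : Fin d)
    (r : RowData lam (Fin d)) :
    lowerVec K lam c r = ∑ i ∈ Finset.range d, (if h : c ∈ (r i).1 then
      (Multiset.count c (r i).1 : K) • Finsupp.single (lowR lam c r i h) (1 : K) else 0) := by
  rw [lowerVec_def]
  apply finsum_eq_sum_of_support_subset
  intro i hi
  simp only [Function.mem_support, Finset.coe_range, Set.mem_Iio]
  by_contra h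
  apply hi
  have hempty : c ∉ (r i).1 := by
    rw [row_empty hlen r (not_lt.mp h)]
    exact Multiset.notMem_zero c
  simp only [dif_neg hempty]

lemma lowerL_apply (c : Fin d) (v : SymMod lam (Fin d) K) :
    lowerL K lam c v = ∑ r ∈ v.support, v r • lowerVec K lam c r := by
  rw [lowerL, Finsupp.lsum_apply, Finsupp.sum]
  simp only [LinearMap.toSpanSingleton_apply]

/-- row potential: `∑_x 2^x`. -/
def rv {d : ℕ} (m : Multiset (Fin d)) : ℕ := (m.map (fun x => 2 ^ x.1)).sum

/-- total potential of a row datum. -/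
noncomputable def pot (lam : ℕ →₀ ℕ) {d : ℕ} (r : RowData lam (Fin d)) : ℕ :=
  ∑ i ∈ Finset.range d, i * rv ((r i).1)

/-- number of entries with value `≤ b`. -/
noncomputable def elcount (lam : ℕ →₀ ℕ) {d : ℕ} (r : RowData lam (Fin d)) (b : ℕ) : ℕ :=
  ∑ i ∈ Finset.range d, (((r i).1.filter (fun x => x.1 ≤ b)).card)

/-- KEY extremal lemma: a nonzero vector killed by all lowering operators has a tabloid in
its support all of whose entries are at most their row index. -/
lemma key_lemma (hlen : ∀ i : ℕ, d ≤ i → lam i = 0) (v : SymMod lam (Fin d) K) (hv0 : v ≠ 0)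
    (hkill : ∀ c : Fin d, 1 ≤ (c : ℕ) → lowerL K lam c v = 0) :
    ∃ r ∈ v.support, ∀ i : ℕ, ∀ x ∈ (r i).1, x.1 ≤ i := by
  obtain ⟨rs, hrs, hmax⟩ := Finset.exists_max_image v.support (pot lam)
    (Finsupp.support_nonempty_iff.mpr hv0)
  refine ⟨rs, hrs, ?_⟩
  by_contra hbad
  push_neg at hbad
  have hex : ∃ i : ℕ, ∃ x ∈ (rs i).1, i < x.1 := by
    obtain ⟨i, x, hx, hlt⟩ := hbad
    exact ⟨i, x, hx, hlt⟩
  obtain ⟨j0, ⟨c, hcmem, hclt⟩, hminP⟩ :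
      ∃ j0 : ℕ, (∃ x ∈ (rs j0).1, j0 < x.1) ∧
        ∀ i < j0, ¬ ∃ x ∈ (rs i).1, i < x.1 :=
    ⟨Nat.find hex, Nat.find_spec hex, fun i hi => Nat.find_min hex hi⟩
  have hmin : ∀ i < j0, ∀ x ∈ (rs i).1, x.1 ≤ i := by
    intro i hi x hx
    by_contra hgtx
    exact hminP i hi ⟨x, hx, by omega⟩
  have hc1 : 1 ≤ (c : ℕ) := by omega
  have hj0d : j0 < d := mem_row_lt hlen hcmem
  set s := lowR lam c rs j0 hcmem with hs
  -- the key uniqueness of preimages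
  have huniq : ∀ r, v r ≠ 0 → ∀ i : ℕ, ∀ h : c ∈ (r i).1,
      lowR lam c r i h = s → r = rs ∧ i = j0 := by
    intro r hvr i h heq
    have hrmem : r ∈ v.support := Finsupp.mem_support_iff.mpr hvr
    have hrowk : ∀ k : ℕ, k ≠ i → k ≠ j0 → r k = rs k := by
      intro k hk1 hk2
      have h1 := congrFun heq k
      simp only [hs, lowR] at h1
      erw [Function.update_of_ne hk1, Function.update_of_ne hk2] at h1
      exact h1
    rcases eq_or_ne i j0 with heqi | hne
    · refine ⟨?_, heqi⟩
      subst heqi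
      funext k
      rcases eq_or_ne k i with heqk | hk
      · subst heqk
        have h1 := congrFun heq k
        simp only [hs, lowR] at h1
        erw [Function.update_self, Function.update_self] at h1
        have h2 := Subtype.ext_iff.mp h1
        rw [Multiset.cons_inj_right] at h2
        apply Subtype.ext
        calc (r k).1 = c ::ₘ (r k).1.erase c := (Multiset.cons_erase h).symm
          _ = c ::ₘ (rs k).1.erase c := by rw [h2]
          _ = (rs k).1 := Multiset.cons_erase hcmem
      · exact hrowk k hk hk
    · exfalso
      have hIi : (rs i).1 = cm1 c ::ₘ (r i).1.erase c := by
        have h1 := congrFun heq i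
        simp only [hs, lowR] at h1
        erw [Function.update_self, Function.update_of_ne hne] at h1
        exact (Subtype.ext_iff.mp h1).symm
      have hIj : (r j0).1 = cm1 c ::ₘ (rs j0).1.erase c := by
        have h1 := congrFun heq j0
        simp only [hs, lowR] at h1
        erw [Function.update_of_ne (Ne.symm hne), Function.update_self] at h1
        exact Subtype.ext_iff.mp h1
      rcases lt_or_gt_of_ne hne with hlt | hgt
      · -- i < j0 : contradiction with minimality of j0
        have hmem2 : cm1 c ∈ (rs i).1 := by
          rw [hIi]
          exact Multiset.mem_cons_self _ _
        have h3 := hmin i hlt (cm1 c) hmem2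
        have h4 : (cm1 c).1 = (c : ℕ) - 1 := rfl
        omega
      · -- i > j0 : potential strictly increases, contradiction with maximality
        have hid : i < d := mem_row_lt hlen h
        have hrv : ∀ (m : Multiset (Fin d)) (hm : c ∈ m),
            rv m = 2 ^ (c : ℕ) + rv (m.erase c) := by
          intro m hm
          conv_lhs => rw [← Multiset.cons_erase hm]
          rw [rv, Multiset.map_cons, Multiset.sum_cons]
          rfl
        have hrvc : ∀ m : Multiset (Fin d),
            rv (cm1 c ::ₘ m) = 2 ^ ((c : ℕ) - 1) + rv m := by
          intro m
          rw [rv, Multiset.map_cons, Multiset.sum_cons]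
          rfl
        have e1 : rv ((rs i).1) + 2 ^ (c : ℕ) = rv ((r i).1) + 2 ^ ((c : ℕ) - 1) := by
          rw [hIi, hrvc, hrv ((r i).1) h]
          omega
        have e2 : rv ((r j0).1) + 2 ^ (c : ℕ) = rv ((rs j0).1) + 2 ^ ((c : ℕ) - 1) := by
          rw [hIj, hrvc, hrv ((rs j0).1) hcmem]
          omega
        have hpow : 2 ^ (c : ℕ) = 2 * 2 ^ ((c : ℕ) - 1) := by
          conv_lhs => rw [show (c : ℕ) = ((c : ℕ) - 1) + 1 by omega]
          rw [pow_succ]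
          ring
        have hsplit : ∀ rr : RowData lam (Fin d), pot lam rr
            = i * rv ((rr i).1) + (j0 * rv ((rr j0).1)
              + ∑ k ∈ ((Finset.range d).erase i).erase j0, k * rv ((rr k).1)) := by
          intro rr
          rw [pot, ← Finset.add_sum_erase _ _ (Finset.mem_range.mpr hid)]
          congr 1
          rw [← Finset.add_sum_erase _ _
            (Finset.mem_erase.mpr ⟨Ne.symm hne, Finset.mem_range.mpr hj0d⟩)]
        have hresteq : ∑ k ∈ ((Finset.range d).erase i).erase j0, k * rv ((r k).1)
            = ∑ k ∈ ((Finset.range d).erase i).erase j0, k * rv ((rs k).1) := by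
          apply Finset.sum_congr rfl
          intro k hk
          rw [Finset.mem_erase, Finset.mem_erase] at hk
          rw [hrowk k hk.2.1 hk.1]
        have hple := hmax r hrmem
        rw [hsplit r, hsplit rs, hresteq] at hple
        have hA : rv ((r i).1) = rv ((rs i).1) + 2 ^ ((c : ℕ) - 1) := by omega
        have hB : rv ((rs j0).1) = rv ((r j0).1) + 2 ^ ((c : ℕ) - 1) := by omega
        rw [hA, hB, Nat.mul_add, Nat.mul_add] at hple
        have hfin : j0 * 2 ^ ((c : ℕ) - 1) < i * 2 ^ ((c : ℕ) - 1) :=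
          Nat.mul_lt_mul_of_lt_of_le hgt (le_refl _) (by positivity)
        omega
  -- the coefficient relation
  have hkc := hkill c hc1
  have h0 : (lowerL K lam c v) s = 0 := by rw [hkc]; rfl
  rw [lowerL_apply] at h0
  rw [Finsupp.finset_sum_apply] at h0
  have hterm : ∀ r ∈ v.support,
      ((v r • lowerVec K lam c r) s : K)
        = ∑ i ∈ Finset.range d, (if h : c ∈ (r i).1 then
            (if lowR lam c r i h = s then v r * (Multiset.count c (r i).1 : K) else 0)
          else 0) := by
    intro r _
    rw [Finsupp.smul_apply, lowerVec_eq_sum hlen, Finsupp.finset_sum_apply, Finset.smul_sum]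
    apply Finset.sum_congr rfl
    intro i _
    by_cases h : c ∈ (r i).1
    · rw [dif_pos h, dif_pos h, Finsupp.smul_apply, Finsupp.single_apply]
      by_cases he : lowR lam c r i h = s
      · rw [if_pos he, if_pos he]
        rw [smul_eq_mul, smul_eq_mul, mul_one, mul_comm]
      · rw [if_neg he, if_neg he]
        rw [smul_eq_mul, smul_eq_mul, mul_zero, mul_zero]
    · rw [dif_neg h, dif_neg h]
      rw [Finsupp.coe_zero, Pi.zero_apply, smul_zero]
  rw [Finset.sum_congr rfl hterm] at h0
  rw [Finset.sum_eq_single_of_mem rs hrs] at h0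
  · rw [Finset.sum_eq_single_of_mem j0 (Finset.mem_range.mpr hj0d)] at h0
    · rw [dif_pos hcmem, if_pos rfl] at h0
      have hvrs : v rs ≠ 0 := Finsupp.mem_support_iff.mp hrs
      have hcount : (Multiset.count c (rs j0).1 : K) ≠ 0 := by
        rw [Nat.cast_ne_zero]
        exact fun hc0 => (Multiset.count_eq_zero.mp hc0) hcmem
      exact (mul_ne_zero hvrs hcount) h0
    · intro i _ hine
      by_cases h : c ∈ (rs i).1
      · rw [dif_pos h]
        rw [if_neg (fun heq => hine (huniq rs (Finsupp.mem_support_iff.mp hrs) i h heq).2)]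
      · rw [dif_neg h]
  · intro r hr hrne
    apply Finset.sum_eq_zero
    intro i _
    by_cases h : c ∈ (r i).1
    · rw [dif_pos h]
      rw [if_neg (fun heq => hrne (huniq r (Finsupp.mem_support_iff.mp hr) i h heq).1)]
    · rw [dif_neg h]

/-- a polytabloid with a repeated entry in a column vanishes. -/
lemma polytabloid_eq_zero {t : Tab lam (Fin d)} {p q : Cell lam} (hpq : p ≠ q)
    (hcol : p.1.2 = q.1.2) (hval : t p = t q) : polytabloid K lam t = 0 := by
  rw [polytabloid]
  set τ := Equiv.swap p q with hτ
  have htτ : ∀ y : Cell lam, t (τ y) = t y := by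
    intro y
    rcases eq_or_ne y p with rfl | hyp
    · rw [hτ, Equiv.swap_apply_left, ← hval]
    · rcases eq_or_ne y q with rfl | hyq
      · rw [hτ, Equiv.swap_apply_right, hval]
      · rw [hτ, Equiv.swap_apply_of_ne_of_ne hyp hyq]
  have hcolτ : ColPres lam τ := by
    intro y
    rcases eq_or_ne y p with rfl | hyp
    · rw [hτ, Equiv.swap_apply_left, ← hcol]
    · rcases eq_or_ne y q with rfl | hyq
      · rw [hτ, Equiv.swap_apply_right, hcol]
      · rw [hτ, Equiv.swap_apply_of_ne_of_ne hyp hyq]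
  have hperm : ∀ σ : Equiv.Perm (Cell lam), permTab lam t (σ * τ) = permTab lam t σ := by
    intro σ
    funext x
    show t ((σ * τ)⁻¹ x) = t (σ⁻¹ x)
    have h1 : (σ * τ)⁻¹ x = τ (σ⁻¹ x) := by
      rw [mul_inv_rev]
      have : τ⁻¹ = τ := by rw [hτ, Equiv.swap_inv]
      rw [Equiv.Perm.mul_apply, this]
    rw [h1, htτ]
  have hcpiff : ∀ σ : Equiv.Perm (Cell lam), ColPres lam (σ * τ) → ColPres lam σ := by
    intro σ h y
    have h2 : σ y = (σ * τ) (τ y) := by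
      rw [Equiv.Perm.mul_apply, hτ, Equiv.swap_apply_self]
    calc (σ y).1.2 = ((σ * τ) (τ y)).1.2 := by rw [h2]
      _ = (τ y).1.2 := h (τ y)
      _ = y.1.2 := hcolτ y
  have hcpiff2 : ∀ σ : Equiv.Perm (Cell lam), ColPres lam σ → ColPres lam (σ * τ) := by
    intro σ h y
    calc ((σ * τ) y).1.2 = (σ (τ y)).1.2 := by rw [Equiv.Perm.mul_apply]
      _ = (τ y).1.2 := h (τ y)
      _ = y.1.2 := hcolτ y
  have hτne : τ ≠ 1 := by
    intro h
    apply hpq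
    have : τ p = p := by rw [h]; rfl
    rw [hτ, Equiv.swap_apply_left] at this
    exact this.symm
  refine Finset.sum_involution (fun σ _ => σ * τ) ?_ ?_ (fun σ _ => Finset.mem_univ _) ?_
  · intro σ _
    by_cases hcp : ColPres lam σ
    · rw [if_pos hcp, if_pos (hcpiff2 σ hcp), hperm]
      have hs : ((Equiv.Perm.sign (σ * τ) : ℤˣ) : ℤ) = -((Equiv.Perm.sign σ : ℤˣ) : ℤ) := by
        rw [map_mul, hτ, Equiv.Perm.sign_swap hpq]
        simp
      rw [hs, neg_smul]
      exact add_neg_cancel _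
    · rw [if_neg hcp, if_neg (fun h => hcp (hcpiff σ h))]
      exact add_zero 0
  · intro σ _ _
    intro h
    apply hτne
    exact mul_eq_left.mp h
  · intro σ _
    show σ * τ * τ = σ
    rw [mul_assoc, hτ, Equiv.swap_mul_self, mul_one]

lemma rowData_update (c : Fin d) (u : Tab lam (Fin d)) (q : Cell lam) {i : ℕ}
    (hrow : q.1.1 = i) (huq : u q = c) (hc : c ∈ (rowData lam u i).1) :
    rowData lam (Function.update u q (cm1 c)) = lowR lam c (rowData lam u) i hc := by
  subst hrow
  funext i'
  apply Subtype.ext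
  rcases eq_or_ne i' q.1.1 with heq | hne
  · subst heq
    rw [lowR]
    erw [Function.update_self]
    simp only [rowData]
    have hqmem : q.1.2 ∈ Finset.range (lam q.1.1) := Finset.mem_range.mpr (mem_cells.mp q.2)
    set a : {x // x ∈ Finset.range (lam q.1.1)} := ⟨q.1.2, hqmem⟩ with ha
    have hamem : a ∈ (Finset.range (lam q.1.1)).attach.val := Finset.mem_attach _ a
    have hnd : ((Finset.range (lam q.1.1)).attach.val).Nodup :=
      (Finset.range (lam q.1.1)).attach.nodup
    have hScons : (Finset.range (lam q.1.1)).attach.val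
        = a ::ₘ ((Finset.range (lam q.1.1)).attach.val).erase a :=
      (Multiset.cons_erase hamem).symm
    have hcell : (⟨(q.1.1, a.1), mem_cells.mpr (Finset.mem_range.mp a.2)⟩ : Cell lam) = q := by
      apply Subtype.ext
      exact Prod.ext rfl rfl
    conv_lhs => rw [hScons, Multiset.map_cons]
    have h1 : Function.update u q (cm1 c)
        ⟨(q.1.1, a.1), mem_cells.mpr (Finset.mem_range.mp a.2)⟩ = cm1 c := by
      rw [hcell, Function.update_self]
    rw [h1]
    have h2 : Multiset.map (fun j : {x // x ∈ Finset.range (lam q.1.1)} =>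
          Function.update u q (cm1 c) ⟨(q.1.1, j.1), mem_cells.mpr (Finset.mem_range.mp j.2)⟩)
          (((Finset.range (lam q.1.1)).attach.val).erase a)
        = Multiset.map (fun j : {x // x ∈ Finset.range (lam q.1.1)} =>
          u ⟨(q.1.1, j.1), mem_cells.mpr (Finset.mem_range.mp j.2)⟩)
          (((Finset.range (lam q.1.1)).attach.val).erase a) := by
      apply Multiset.map_congr rfl
      intro j hj
      have hja : j ≠ a := (hnd.mem_erase_iff.mp hj).1
      apply Function.update_of_ne
      intro hcl
      apply hja
      apply Subtype.ext
      exact congrArg (fun z : Cell lam => z.1.2) hcl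
    rw [h2]
    have h3 : Multiset.map (fun j : {x // x ∈ Finset.range (lam q.1.1)} =>
            u ⟨(q.1.1, j.1), mem_cells.mpr (Finset.mem_range.mp j.2)⟩)
            ((Finset.range (lam q.1.1)).attach.val)
        = c ::ₘ Multiset.map (fun j : {x // x ∈ Finset.range (lam q.1.1)} =>
            u ⟨(q.1.1, j.1), mem_cells.mpr (Finset.mem_range.mp j.2)⟩)
            (((Finset.range (lam q.1.1)).attach.val).erase a) := by
      conv_lhs => rw [hScons]
      rw [Multiset.map_cons, hcell, huq]
    rw [h3, Multiset.erase_cons_head]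
    rfl
  · rw [lowR]
    erw [Function.update_of_ne hne]
    simp only [rowData]
    apply Multiset.map_congr rfl
    intro j _
    apply Function.update_of_ne
    intro hcl
    exact hne (congrArg (fun z : Cell lam => z.1.1) hcl)

lemma count_row (c : Fin d) (u : Tab lam (Fin d)) (i : ℕ) :
    Multiset.count c (rowData lam u i).1
      = ((Finset.univ.filter (fun q : Cell lam => u q = c)).filter
          (fun q => q.1.1 = i)).card := by
  simp only [rowData]
  rw [Multiset.count_map]
  rw [show ((Finset.range (lam i)).attach.val.filter
      (fun j : {x // x ∈ Finset.range (lam i)} =>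
        c = u ⟨(i, j.1), mem_cells.mpr (Finset.mem_range.mp j.2)⟩))
      = ((Finset.range (lam i)).attach.filter
      (fun j : {x // x ∈ Finset.range (lam i)} =>
        c = u ⟨(i, j.1), mem_cells.mpr (Finset.mem_range.mp j.2)⟩)).val
    from (Finset.filter_val _ _).symm, ← Finset.card_def]
  refine Finset.card_bij'
    (fun j _ => (⟨(i, j.1), mem_cells.mpr (Finset.mem_range.mp j.2)⟩ : Cell lam))
    (fun q hq => ⟨q.1.2, by
      rw [Finset.mem_filter, Finset.mem_filter] at hq
      have h2 := mem_cells.mp q.2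
      rw [hq.2] at h2
      exact Finset.mem_range.mpr h2⟩) ?_ ?_ ?_ ?_
  · intro j hj
    rw [Finset.mem_filter] at hj
    rw [Finset.mem_filter, Finset.mem_filter]
    exact ⟨⟨Finset.mem_univ _, hj.2.symm⟩, rfl⟩
  · intro q hq
    rw [Finset.mem_filter, Finset.mem_filter] at hq
    rw [Finset.mem_filter]
    refine ⟨Finset.mem_attach _ _, ?_⟩
    have hcell : (⟨(i, q.1.2), mem_cells.mpr (by
        have h2 := mem_cells.mp q.2
        rw [hq.2] at h2
        exact h2)⟩ : Cell lam) = q := by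
      apply Subtype.ext
      exact Prod.ext hq.2.symm rfl
    show c = u ⟨(i, q.1.2), _⟩
    rw [show (⟨(i, q.1.2), _⟩ : Cell lam) = q from hcell]
    exact hq.1.2.symm
  · intro j hj
    apply Subtype.ext
    rfl
  · intro q hq
    rw [Finset.mem_filter, Finset.mem_filter] at hq
    apply Subtype.ext
    exact Prod.ext hq.2.symm rfl

lemma mem_row_of_cell (u : Tab lam (Fin d)) {c : Fin d} {q : Cell lam} {i : ℕ}
    (hrow : q.1.1 = i) (huq : u q = c) : c ∈ (rowData lam u i).1 := by
  subst hrow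
  have hqmem : q.1.2 ∈ Finset.range (lam q.1.1) := Finset.mem_range.mpr (mem_cells.mp q.2)
  simp only [rowData]
  refine Multiset.mem_map.mpr ⟨⟨q.1.2, hqmem⟩, Finset.mem_def.mp (Finset.mem_attach _ _), ?_⟩
  rw [show (⟨(q.1.1, q.1.2), mem_cells.mpr (Finset.mem_range.mp hqmem)⟩ : Cell lam) = q from
    Subtype.ext rfl]
  exact huq

lemma lowerVec_rowData (hlen : ∀ i : ℕ, d ≤ i → lam i = 0) (c : Fin d) (u : Tab lam (Fin d)) :
    lowerVec K lam c (rowData lam u)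
      = ∑ q ∈ Finset.univ.filter (fun q : Cell lam => u q = c),
          Finsupp.single (rowData lam (Function.update u q (cm1 c))) (1 : K) := by
  rw [lowerVec_eq_sum hlen]
  rw [← Finset.sum_fiberwise_of_maps_to (t := Finset.range d)
    (g := fun q : Cell lam => q.1.1)
    (fun q _ => Finset.mem_range.mpr (cell_row_lt_d hlen q))
    (fun q => Finsupp.single (rowData lam (Function.update u q (cm1 c))) (1 : K))]
  apply Finset.sum_congr rfl
  intro i _
  by_cases hc : c ∈ (rowData lam u i).1
  · rw [dif_pos hc]
    have hall : ∀ q ∈ (Finset.univ.filter (fun q : Cell lam => u q = c)).filter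
        (fun q => q.1.1 = i),
        Finsupp.single (rowData lam (Function.update u q (cm1 c))) (1 : K)
          = Finsupp.single (lowR lam c (rowData lam u) i hc) (1 : K) := by
      intro q hq
      rw [Finset.mem_filter, Finset.mem_filter] at hq
      rw [rowData_update c u q hq.2 hq.1.2 hc]
    rw [Finset.sum_congr rfl hall, Finset.sum_const, count_row c u i,
      Nat.cast_smul_eq_nsmul]
  · rw [dif_neg hc]
    have hempty : (Finset.univ.filter (fun q : Cell lam => u q = c)).filter
        (fun q => q.1.1 = i) = ∅ := by
      apply Finset.eq_empty_of_forall_notMem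
      intro q hq
      rw [Finset.mem_filter, Finset.mem_filter] at hq
      exact hc (mem_row_of_cell u hq.2 hq.1.2)
    rw [hempty, Finset.sum_empty]

/-- the derivation formula for the lowering operator on a polytabloid. -/
lemma lowerL_polytabloid (hlen : ∀ i : ℕ, d ≤ i → lam i = 0) (c : Fin d)
    (t : Tab lam (Fin d)) :
    lowerL K lam c (polytabloid K lam t) =
      ∑ q ∈ Finset.univ.filter (fun q : Cell lam => t q = c),
        polytabloid K lam (Function.update t q (cm1 c)) := by
  have hcomm : ∀ (σ : Equiv.Perm (Cell lam)) (q' : Cell lam),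
      permTab lam (Function.update t (σ⁻¹ q') (cm1 c)) σ
        = Function.update (permTab lam t σ) q' (cm1 c) := by
    intro σ q'
    funext x
    show Function.update t (σ⁻¹ q') (cm1 c) (σ⁻¹ x) = _
    rcases eq_or_ne x q' with rfl | hx
    · rw [Function.update_self]
      rw [Function.update_self]
    · rw [Function.update_of_ne hx, Function.update_of_ne (fun h => hx (by
        have := congrArg σ h
        rwa [Equiv.Perm.apply_inv_self, Equiv.Perm.apply_inv_self] at this))]
      rfl
  rw [polytabloid, map_sum]
  have hterm : ∀ σ : Equiv.Perm (Cell lam),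
      lowerL K lam c (if ColPres lam σ then
          ((Equiv.Perm.sign σ : ℤ) • tabloid K lam (permTab lam t σ)) else 0)
        = ∑ q ∈ Finset.univ.filter (fun q : Cell lam => t q = c),
            (if ColPres lam σ then ((Equiv.Perm.sign σ : ℤ) •
              tabloid K lam (permTab lam (Function.update t q (cm1 c)) σ)) else 0) := by
    intro σ
    by_cases hcp : ColPres lam σ
    · rw [if_pos hcp]
      rw [map_zsmul]
      have h1 : lowerL K lam c (tabloid K lam (permTab lam t σ))
          = lowerVec K lam c (rowData lam (permTab lam t σ)) := by
        rw [tabloid, lowerL, Finsupp.lsum_single, LinearMap.toSpanSingleton_apply, one_smul]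
      rw [h1, lowerVec_rowData hlen]
      have h2 : ∑ q' ∈ Finset.univ.filter (fun q' : Cell lam => permTab lam t σ q' = c),
          Finsupp.single (rowData lam (Function.update (permTab lam t σ) q' (cm1 c))) (1 : K)
          = ∑ q ∈ Finset.univ.filter (fun q : Cell lam => t q = c),
            tabloid K lam (permTab lam (Function.update t q (cm1 c)) σ) := by
        refine Finset.sum_bij' (fun q' _ => σ⁻¹ q') (fun q _ => σ q) ?_ ?_ ?_ ?_ ?_
        · intro q' hq'
          rw [Finset.mem_filter] at hq' ⊢
          exact ⟨Finset.mem_univ _, hq'.2⟩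
        · intro q hq
          rw [Finset.mem_filter] at hq ⊢
          refine ⟨Finset.mem_univ _, ?_⟩
          show t (σ⁻¹ (σ q)) = c
          rw [Equiv.Perm.inv_apply_self]
          exact hq.2
        · intro q' _
          exact Equiv.Perm.apply_inv_self σ q'
        · intro q _
          exact Equiv.Perm.inv_apply_self σ q
        · intro q' _
          rw [tabloid, hcomm σ q']
      rw [h2, Finset.smul_sum]
      apply Finset.sum_congr rfl
      intro q _
      rw [if_pos hcp]
    · rw [if_neg hcp, map_zero]
      symm
      apply Finset.sum_eq_zero
      intro q _
      rw [if_neg hcp]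
  rw [Finset.sum_congr rfl (fun σ _ => hterm σ)]
  rw [Finset.sum_comm]
  apply Finset.sum_congr rfl
  intro q _
  rw [polytabloid]

/-- the canonical highest polytabloid is killed by all lowering operators. -/
lemma lowerL_polytabloid_tlam (hlam : IsPartition lam) (hlen : ∀ i : ℕ, d ≤ i → lam i = 0)
    (tlam : Tab lam (Fin d)) (htlam : ∀ p : Cell lam, ((tlam p : Fin d) : ℕ) = p.1.1)
    (c : Fin d) (hc : 1 ≤ (c : ℕ)) :
    lowerL K lam c (polytabloid K lam tlam) = 0 := by
  rw [lowerL_polytabloid hlen c tlam]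
  apply Finset.sum_eq_zero
  intro q hq
  rw [Finset.mem_filter] at hq
  obtain ⟨-, hqc⟩ := hq
  have hqrow : q.1.1 = (c : ℕ) := by rw [← htlam q, hqc]
  have hpmem : ((c : ℕ) - 1, q.1.2) ∈ cells lam := by
    rw [mem_cells]
    calc q.1.2 < lam q.1.1 := mem_cells.mp q.2
      _ = lam (c : ℕ) := by rw [hqrow]
      _ ≤ lam ((c : ℕ) - 1) := hlam _ _ (by omega)
  set p : Cell lam := ⟨((c : ℕ) - 1, q.1.2), hpmem⟩ with hp
  have hpq : p ≠ q := by
    intro h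
    have h2 := congrArg (fun z : Cell lam => z.1.1) h
    simp only [hp] at h2
    rw [hqrow] at h2
    omega
  apply polytabloid_eq_zero hpq rfl
  rw [Function.update_of_ne hpq, Function.update_self]
  apply Fin.ext
  rw [htlam p]
  rfl

lemma dc_finset (S : Finset ℕ) (h : ∀ i j : ℕ, i ≤ j → j ∈ S → i ∈ S) :
    S = Finset.range S.card := by
  have h1 : ∀ i ∈ S, i < S.card := by
    intro i hi
    have hsub : Finset.range (i + 1) ⊆ S := by
      intro k hk
      exact h k i (by rw [Finset.mem_range] at hk; omega) hi
    have := Finset.card_le_card hsub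
    rw [Finset.card_range] at this
    omega
  exact Finset.eq_of_subset_of_card_le (fun i hi => Finset.mem_range.mpr (h1 i hi))
    (le_of_eq (Finset.card_range S.card))

lemma card_cells_row (i : ℕ) :
    (Finset.univ.filter (fun p : Cell lam => p.1.1 = i)).card = lam i := by
  rw [← Finset.card_range (lam i)]
  refine Finset.card_bij' (fun p _ => p.1.2)
    (fun j hj => (⟨(i, j), mem_cells.mpr (Finset.mem_range.mp hj)⟩ : Cell lam))
    ?_ ?_ ?_ ?_
  · intro p hp
    rw [Finset.mem_filter] at hp
    show p.1.2 ∈ Finset.range (lam i)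
    have h2 := mem_cells.mp p.2
    rw [hp.2] at h2
    exact Finset.mem_range.mpr h2
  · intro j hj
    rw [Finset.mem_filter]
    exact ⟨Finset.mem_univ _, rfl⟩
  · intro p hp
    rw [Finset.mem_filter] at hp
    apply Subtype.ext
    exact Prod.ext hp.2.symm rfl
  · intro j hj
    rfl

lemma range_filter_le (n b : ℕ) :
    (Finset.range n).filter (fun i => i ≤ b) = Finset.range (min n (b + 1)) := by
  ext i
  simp only [Finset.mem_filter, Finset.mem_range, lt_min_iff]
  omega

/-- counting: a column-distinct tableau has at most `λ_1 + ⋯ + λ_{b+1}` entries `≤ b`. -/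
lemma content_bound (hlam : IsPartition lam) (hlen : ∀ i : ℕ, d ≤ i → lam i = 0)
    (t : Tab lam (Fin d))
    (hcd : ∀ p q : Cell lam, p ≠ q → p.1.2 = q.1.2 → t p ≠ t q) (b : ℕ) :
    (Finset.univ.filter (fun p : Cell lam => (t p).1 ≤ b)).card
      ≤ ∑ i ∈ Finset.range (b + 1), lam i := by
  set L := lam 0 with hL
  have hcolL : ∀ p : Cell lam, p.1.2 < L := by
    intro p
    calc p.1.2 < lam p.1.1 := mem_cells.mp p.2
      _ ≤ lam 0 := hlam 0 p.1.1 (Nat.zero_le _)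
  set A := Finset.univ.filter (fun p : Cell lam => (t p).1 ≤ b) with hA
  set B := Finset.univ.filter (fun p : Cell lam => p.1.1 ≤ b) with hB
  have hcardA : A.card = ∑ j ∈ Finset.range L, (A.filter (fun p => p.1.2 = j)).card :=
    Finset.card_eq_sum_card_fiberwise (fun p _ => Finset.mem_range.mpr (hcolL p))
  have hcardB : B.card = ∑ j ∈ Finset.range L, (B.filter (fun p => p.1.2 = j)).card :=
    Finset.card_eq_sum_card_fiberwise (fun p _ => Finset.mem_range.mpr (hcolL p))
  have hper : ∀ j : ℕ, (A.filter (fun p => p.1.2 = j)).card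
      ≤ (B.filter (fun p => p.1.2 = j)).card := by
    intro j
    set Rj := (Finset.range d).filter (fun i => j < lam i) with hRj
    have hRdc : Rj = Finset.range Rj.card := by
      apply dc_finset
      intro i i' hii' hi'
      rw [hRj, Finset.mem_filter, Finset.mem_range] at hi' ⊢
      exact ⟨by omega, lt_of_lt_of_le hi'.2 (hlam i i' hii')⟩
    -- card of B-fiber
    have hBfib : (B.filter (fun p => p.1.2 = j)).card = (Rj.filter (fun i => i ≤ b)).card := by
      refine Finset.card_bij' (fun p _ => p.1.1)
        (fun i hi => (⟨(i, j), by
          rw [Finset.mem_filter, hRj, Finset.mem_filter] at hi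
          exact mem_cells.mpr hi.1.2⟩ : Cell lam)) ?_ ?_ ?_ ?_
      · intro p hp
        rw [Finset.mem_filter, hB, Finset.mem_filter] at hp
        show p.1.1 ∈ Rj.filter (fun i => i ≤ b)
        rw [Finset.mem_filter, hRj, Finset.mem_filter, Finset.mem_range]
        refine ⟨⟨cell_row_lt_d hlen p, ?_⟩, hp.1.2⟩
        have h2 := mem_cells.mp p.2
        rw [hp.2] at h2
        exact h2
      · intro i hi
        rw [Finset.mem_filter] at hi
        rw [Finset.mem_filter, hB, Finset.mem_filter]
        rw [hRj, Finset.mem_filter] at hi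
        exact ⟨⟨Finset.mem_univ _, hi.2⟩, rfl⟩
      · intro p hp
        rw [Finset.mem_filter] at hp
        apply Subtype.ext
        exact Prod.ext rfl hp.2.symm
      · intro i hi
        rfl
    have hBval : (B.filter (fun p => p.1.2 = j)).card = min Rj.card (b + 1) := by
      rw [hBfib]
      conv_lhs => rw [hRdc]
      rw [range_filter_le, Finset.card_range]
    have hA1 : (A.filter (fun p => p.1.2 = j)).card ≤ b + 1 := by
      have := Finset.card_le_card_of_injOn (s := A.filter (fun p => p.1.2 = j))
        (fun p => ((t p).1 : ℕ)) (t := Finset.range (b + 1)) ?_ ?_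
      · rwa [Finset.card_range] at this
      · intro p hp
        rw [Finset.mem_coe, Finset.mem_filter, hA, Finset.mem_filter] at hp
        show ((t p).1 : ℕ) ∈ Finset.range (b + 1)
        rw [Finset.mem_range]
        omega
      · intro p hp q hq hval
        simp only [Finset.coe_filter, Set.mem_setOf_eq] at hp hq
        by_contra hne
        exact hcd p q hne (by rw [hp.2, hq.2]) (Fin.ext hval)
    have hA2 : (A.filter (fun p => p.1.2 = j)).card ≤ Rj.card := by
      apply Finset.card_le_card_of_injOn (fun p => p.1.1)
      · intro p hp
        rw [Finset.mem_coe, Finset.mem_filter] at hp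
        rw [hRj, Finset.mem_coe, Finset.mem_filter, Finset.mem_range]
        refine ⟨cell_row_lt_d hlen p, ?_⟩
        have h2 := mem_cells.mp p.2
        rw [hp.2] at h2
        exact h2
      · intro p hp q hq hval
        simp only [Finset.coe_filter, Set.mem_setOf_eq] at hp hq
        apply Subtype.ext
        exact Prod.ext hval (by rw [hp.2, hq.2])
    rw [hBval]
    omega
  have hAB : A.card ≤ B.card := by
    rw [hcardA, hcardB]
    exact Finset.sum_le_sum (fun j _ => hper j)
  have hBcount : B.card = ∑ i ∈ Finset.range (b + 1), lam i := by
    have h1 : B.card = ∑ i ∈ Finset.range (b + 1), (B.filter (fun p => p.1.1 = i)).card := by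
      apply Finset.card_eq_sum_card_fiberwise
      intro p hp
      rw [hB, Finset.mem_coe, Finset.mem_filter] at hp
      rw [Finset.mem_coe, Finset.mem_range]
      dsimp only
      omega
    rw [h1]
    apply Finset.sum_congr rfl
    intro i hi
    rw [Finset.mem_range] at hi
    rw [← card_cells_row (lam := lam) i]
    congr 1
    rw [hB, Finset.filter_filter]
    apply Finset.filter_congr
    intro p _
    constructor
    · intro h; exact h.2
    · intro h; exact ⟨by omega, h⟩
  rw [hBcount] at hAB
  exact hAB

lemma elcount_rowData (hlen : ∀ i : ℕ, d ≤ i → lam i = 0) (u : Tab lam (Fin d)) (b : ℕ) :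
    elcount lam (rowData lam u) b
      = (Finset.univ.filter (fun p : Cell lam => (u p).1 ≤ b)).card := by
  have h1 : (Finset.univ.filter (fun p : Cell lam => (u p).1 ≤ b)).card
      = ∑ i ∈ Finset.range d, ((Finset.univ.filter (fun p : Cell lam => (u p).1 ≤ b)).filter
          (fun p => p.1.1 = i)).card :=
    Finset.card_eq_sum_card_fiberwise (fun p _ => Finset.mem_range.mpr (cell_row_lt_d hlen p))
  rw [elcount, h1]
  apply Finset.sum_congr rfl
  intro i _
  rw [← Multiset.countP_eq_card_filter]
  simp only [rowData]
  rw [Multiset.countP_map]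
  rw [show (Finset.range (lam i)).attach.val = ((Finset.range (lam i)).attach).1 from rfl]
  rw [← Finset.filter_val, ← Finset.card_def]
  refine Finset.card_bij'
    (fun j _ => (⟨(i, j.1), mem_cells.mpr (Finset.mem_range.mp j.2)⟩ : Cell lam))
    (fun p hp => ⟨p.1.2, by
      rw [Finset.mem_filter, Finset.mem_filter] at hp
      have h2 := mem_cells.mp p.2
      rw [hp.2] at h2
      exact Finset.mem_range.mpr h2⟩) ?_ ?_ ?_ ?_
  · intro j hj
    rw [Finset.mem_filter] at hj
    rw [Finset.mem_filter, Finset.mem_filter]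
    exact ⟨⟨Finset.mem_univ _, hj.2⟩, rfl⟩
  · intro p hp
    rw [Finset.mem_filter, Finset.mem_filter] at hp
    rw [Finset.mem_filter]
    refine ⟨Finset.mem_attach _ _, ?_⟩
    have hcell : (⟨(i, p.1.2), mem_cells.mpr (by
        have h2 := mem_cells.mp p.2
        rw [hp.2] at h2
        exact h2)⟩ : Cell lam) = p := by
      apply Subtype.ext
      exact Prod.ext hp.2.symm rfl
    show ((u ⟨(i, p.1.2), _⟩ : Fin d) : ℕ) ≤ b
    rw [show (⟨(i, p.1.2), _⟩ : Cell lam) = p from hcell]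
    exact hp.1.2
  · intro j hj
    apply Subtype.ext
    rfl
  · intro p hp
    rw [Finset.mem_filter, Finset.mem_filter] at hp
    apply Subtype.ext
    exact Prod.ext hp.2.symm rfl

/-- every tabloid in the support of an element of `∇^λ` has at most `λ_1 + ⋯ + λ_{b+1}`
entries `≤ b`. -/
lemma supp_bound (hlam : IsPartition lam) (hlen : ∀ i : ℕ, d ≤ i → lam i = 0)
    {v : SymMod lam (Fin d) K} (hv : v ∈ nabla K lam (Fin d)) {r : RowData lam (Fin d)}
    (hr : r ∈ v.support) (b : ℕ) :
    elcount lam r b ≤ ∑ i ∈ Finset.range (b + 1), lam i := by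
  rw [nabla] at hv
  obtain ⟨cf, hcf⟩ := (Submodule.mem_span_range_iff_exists_fun K).mp hv
  set CD := fun t : Tab lam (Fin d) =>
    ∀ p q : Cell lam, p ≠ q → p.1.2 = q.1.2 → t p ≠ t q with hCD
  have hzero : ∑ t ∈ Finset.univ.filter (fun t => ¬ CD t),
      cf t • polytabloid K lam t = 0 := by
    apply Finset.sum_eq_zero
    intro t ht
    rw [Finset.mem_filter] at ht
    have h2 : ∃ p q : Cell lam, p ≠ q ∧ p.1.2 = q.1.2 ∧ t p = t q := by
      by_contra hno
      push_neg at hno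
      exact ht.2 (fun p q hpq hcol => hno p q hpq hcol)
    obtain ⟨p, q, hpq, hcol, hval⟩ := h2
    rw [polytabloid_eq_zero hpq hcol hval, smul_zero]
  have hsplit : v = ∑ t ∈ Finset.univ.filter CD, cf t • polytabloid K lam t := by
    rw [← hcf, ← Finset.sum_filter_add_sum_filter_not Finset.univ CD
      (fun t => cf t • polytabloid K lam t), hzero, add_zero]
  have hrsupp : r ∈ (∑ t ∈ Finset.univ.filter CD, cf t • polytabloid K lam t).support := by
    rw [← hsplit]; exact hr
  obtain ⟨tt, htmem, hrt⟩ := Finset.mem_biUnion.mp (Finsupp.support_finset_sum hrsupp)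
  have htcd : CD tt := (Finset.mem_filter.mp htmem).2
  have hrt2 : r ∈ (polytabloid K lam tt).support := Finsupp.support_smul hrt
  rw [polytabloid] at hrt2
  obtain ⟨σ, -, hrσ⟩ := Finset.mem_biUnion.mp (Finsupp.support_finset_sum hrt2)
  by_cases hcp : ColPres lam σ
  swap
  · rw [if_neg hcp] at hrσ
    simp at hrσ
  rw [if_pos hcp] at hrσ
  have hrs : r ∈ ((Equiv.Perm.sign σ : ℤ) • tabloid K lam (permTab lam tt σ)).support := hrσ
  have hreq : r = rowData lam (permTab lam tt σ) := by
    have h3 := Finsupp.support_smul hrs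
    rw [tabloid] at h3
    have h4 := Finsupp.support_single_subset h3
    rwa [Finset.mem_singleton] at h4
  rw [hreq, elcount_rowData hlen]
  have hcard : (Finset.univ.filter (fun p : Cell lam => ((permTab lam tt σ) p).1 ≤ b)).card
      = (Finset.univ.filter (fun p : Cell lam => (tt p).1 ≤ b)).card := by
    refine Finset.card_bij' (fun p _ => σ⁻¹ p) (fun p _ => σ p) ?_ ?_ ?_ ?_
    · intro p hp
      rw [Finset.mem_filter] at hp ⊢
      exact ⟨Finset.mem_univ _, hp.2⟩
    · intro p hp
      rw [Finset.mem_filter] at hp ⊢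
      refine ⟨Finset.mem_univ _, ?_⟩
      show ((tt (σ⁻¹ (σ p)) : Fin d) : ℕ) ≤ b
      rw [Equiv.Perm.inv_apply_self]
      exact hp.2
    · intro p _
      exact Equiv.Perm.apply_inv_self σ p
    · intro p _
      exact Equiv.Perm.inv_apply_self σ p
  rw [hcard]
  exact content_bound hlam hlen tt htcd b

/-- the coefficient of the leading tabloid in `F(t^λ)` is `1`. -/
lemma polytabloid_tlam_coeff (tlam : Tab lam (Fin d))
    (htlam : ∀ p : Cell lam, ((tlam p : Fin d) : ℕ) = p.1.1) :
    (polytabloid K lam tlam) (rowData lam tlam) = 1 := by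
  rw [polytabloid, Finsupp.finset_sum_apply]
  rw [Finset.sum_eq_single (1 : Equiv.Perm (Cell lam))]
  · have hcp : ColPres lam 1 := fun p => rfl
    rw [if_pos hcp]
    have hperm : permTab lam tlam 1 = tlam := by funext p; rw [permTab]; simp
    rw [hperm, tabloid]
    simp
  · intro σ _ hσ
    by_cases hcp : ColPres lam σ
    · rw [if_pos hcp]
      have hne : rowData lam (permTab lam tlam σ) ≠ rowData lam tlam := by
        intro heq
        apply hσ
        have hfix : ∀ p : Cell lam, σ⁻¹ p = p := by
          intro p
          obtain ⟨⟨i, j⟩, hp⟩ := p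
          have hj : j < lam i := mem_cells.mp hp
          have h1 : (rowData lam (permTab lam tlam σ) i).1 = (rowData lam tlam i).1 :=
            congrArg (fun f => (f i).1) heq
          have hmem : tlam (σ⁻¹ ⟨(i, j), hp⟩) ∈ (rowData lam tlam i).1 := by
            rw [← h1]
            simp only [rowData]
            exact Multiset.mem_map.mpr ⟨⟨j, Finset.mem_range.mpr hj⟩, Finset.mem_def.mp (Finset.mem_attach _ _), rfl⟩
          have hrowval : ((tlam (σ⁻¹ ⟨(i, j), hp⟩) : Fin d) : ℕ) = i := by
            simp only [rowData] at hmem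
            obtain ⟨j', _, hval⟩ := Multiset.mem_map.mp hmem
            rw [← hval]
            exact htlam _
          have hrow : (σ⁻¹ ⟨(i, j), hp⟩).1.1 = i := by
            rw [← htlam (σ⁻¹ ⟨(i, j), hp⟩)]; exact hrowval
          have hcol : (σ⁻¹ ⟨(i, j), hp⟩).1.2 = j := by
            have h2 := hcp (σ⁻¹ ⟨(i, j), hp⟩)
            rw [Equiv.Perm.apply_inv_self] at h2
            exact h2.symm
          apply Subtype.ext
          exact Prod.ext hrow hcol
        have hinv : σ⁻¹ = 1 := Equiv.ext hfix
        rw [← inv_inv σ, hinv]; rfl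
      rw [tabloid, Finsupp.smul_apply, Finsupp.single_apply, if_neg hne]
      simp
    · rw [if_neg hcp]; rfl
  · intro h; exact absurd (Finset.mem_univ _) h

/-- structure lemma: a nonzero element of `∇^λ` killed by all lowering operators has the
leading tabloid in its support. -/
lemma leading_mem_support (hlam : IsPartition lam) (hlen : ∀ i : ℕ, d ≤ i → lam i = 0)
    (tlam : Tab lam (Fin d)) (htlam : ∀ p : Cell lam, ((tlam p : Fin d) : ℕ) = p.1.1)
    {v : SymMod lam (Fin d) K} (hv : v ∈ nabla K lam (Fin d)) (hv0 : v ≠ 0)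
    (hkill : ∀ c : Fin d, 1 ≤ (c : ℕ) → lowerL K lam c v = 0) :
    rowData lam tlam ∈ v.support := by
  obtain ⟨r, hr, hrow⟩ := key_lemma hlen v hv0 hkill
  have hbound := fun b => supp_bound hlam hlen hv hr b
  have hweq : ∀ i : ℕ, ∀ x ∈ (r i).1, x.1 = i := by
    intro i x hx
    refine le_antisymm (hrow i x hx) ?_
    by_contra hlt
    push_neg at hlt
    set b := x.1 with hb
    have hid : i < d := mem_row_lt hlen hx
    have h1 : ∀ i' ∈ Finset.range (b + 1),
        ((r i').1.filter (fun y : Fin d => y.1 ≤ b)).card = lam i' := by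
      intro i' hi'
      rw [Finset.mem_range] at hi'
      rw [Multiset.filter_eq_self.mpr fun y hy => le_trans (hrow i' y hy) (by omega),
        row_card]
    have h2 : 1 ≤ ((r i).1.filter (fun y : Fin d => y.1 ≤ b)).card := by
      have : x ∈ (r i).1.filter (fun y : Fin d => y.1 ≤ b) :=
        Multiset.mem_filter.mpr ⟨hx, le_refl _⟩
      exact Multiset.card_pos_iff_exists_mem.mpr ⟨x, this⟩
    have hsub : insert i (Finset.range (b + 1)) ⊆ Finset.range d := by
      intro y hy
      rw [Finset.mem_insert] at hy
      rw [Finset.mem_range]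
      rcases hy with rfl | hy
      · exact hid
      · rw [Finset.mem_range] at hy; omega
    have hni : i ∉ Finset.range (b + 1) := by rw [Finset.mem_range]; omega
    have h3 : ∑ i' ∈ insert i (Finset.range (b + 1)),
        ((r i').1.filter (fun y : Fin d => y.1 ≤ b)).card ≤ elcount lam r b := by
      rw [elcount]
      exact Finset.sum_le_sum_of_subset hsub
    rw [Finset.sum_insert hni] at h3
    have h5 : ∑ i' ∈ Finset.range (b + 1),
        ((r i').1.filter (fun y : Fin d => y.1 ≤ b)).card
        = ∑ i' ∈ Finset.range (b + 1), lam i' := Finset.sum_congr rfl h1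
    have h4 := hbound b
    omega
  have hreq : r = rowData lam tlam := by
    funext i
    apply Subtype.ext
    by_cases h0 : lam i = 0
    · have e1 : Multiset.card (r i).1 = 0 := by rw [row_card, h0]
      have e2 : Multiset.card (rowData lam tlam i).1 = 0 := by rw [row_card, h0]
      rw [Multiset.card_eq_zero.mp e1, Multiset.card_eq_zero.mp e2]
    · have hid : i < d := by
        by_contra h
        exact h0 (hlen i (not_lt.mp h))
      have e1 : (r i).1 = Multiset.replicate (lam i) (⟨i, hid⟩ : Fin d) := by
        rw [Multiset.eq_replicate]
        exact ⟨row_card r i, fun x hx => Fin.ext (hweq i x hx)⟩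
      have e2 : (rowData lam tlam i).1 = Multiset.replicate (lam i) (⟨i, hid⟩ : Fin d) := by
        rw [Multiset.eq_replicate]
        refine ⟨row_card _ i, fun x hx => ?_⟩
        simp only [rowData] at hx
        obtain ⟨j, _, hval⟩ := Multiset.mem_map.mp hx
        rw [← hval]
        exact Fin.ext (htlam _)
      rw [e1, e2]
  rwa [hreq] at hr

end Aux

/-- **Proposition (uniqueness of the highest-weight vector in `∇^lam (E)`).**
Let `K` be a field of characteristic zero, `E = K^d`, and let `lam` be a partition with at
most `d` parts.  If `v ∈ ∇^lam (E)` satisfies `X^{(c)} ⬝ v = 0` for every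
strictly-upper-triangular elementary matrix `X^{(c)}` (here `c : Fin d` with `c ≥ 1`,
lowering the entry `c` to `c - 1`), then `v` is a scalar multiple of `F(t^lam)`, where
`t^lam` is the `lam`-tableau with every entry of row `i` equal to `i`. -/
theorem highest_weight_unique (K : Type*) [Field K] [CharZero K] (d : ℕ)
    (lam : ℕ →₀ ℕ) (hlam : IsPartition lam) (hlen : ∀ i : ℕ, d ≤ i → lam i = 0)
    (tlam : Tab lam (Fin d)) (htlam : ∀ p : Cell lam, ((tlam p : Fin d) : ℕ) = p.1.1)
    (v : SymMod lam (Fin d) K) (hv : v ∈ nabla K lam (Fin d))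
    (hkill : ∀ c : Fin d, 1 ≤ (c : ℕ) → lowerL K lam c v = 0) :
    ∃ k : K, v = k • polytabloid K lam tlam := by
  by_cases hv0 : v = 0
  · exact ⟨0, by simp [hv0]⟩
  set k := v (rowData lam tlam) with hk
  refine ⟨k, ?_⟩
  by_contra hne
  set w := v - k • polytabloid K lam tlam with hw
  have hw0 : w ≠ 0 := fun h => hne (by rw [hw, sub_eq_zero] at h; exact h)
  have hwnab : w ∈ nabla K lam (Fin d) :=
    Submodule.sub_mem _ hv (Submodule.smul_mem _ _ (Submodule.subset_span ⟨tlam, rfl⟩))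
  have hwkill : ∀ c : Fin d, 1 ≤ (c : ℕ) → lowerL K lam c w = 0 := by
    intro c hc
    rw [hw, map_sub, map_smul, hkill c hc,
      lowerL_polytabloid_tlam hlam hlen tlam htlam c hc]
    simp
  have hmem := leading_mem_support hlam hlen tlam htlam hwnab hw0 hwkill
  rw [Finsupp.mem_support_iff] at hmem
  apply hmem
  rw [hw, Finsupp.sub_apply, Finsupp.smul_apply, polytabloid_tlam_coeff tlam htlam]
  simp
  exact sub_eq_zero.mpr hk.symm

end Pleth
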